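/- Let G be a finite bipartite simple graph equipped with a weight function assigning to each edge the weight +1 or −1, and suppose that every cycle of G has strictly positive total weight. Let v_0, v_1, v_2, v_3 be four pairwise distinct vertices of G, let P be a path from v_0 to v_2 and P' a path from v_1 to v_3, and let H be the subgraph of G formed by those edges lying in exactly one of P and P' (the symmetric difference of their edge sets). If v_0 and v_1 lie in the same connected component of H, then there exist a path from v_1 to v_2 and a path from v_3 to v_0 in G the sum of whose total weights is at most w(P) + w(P'). -/

import Mathlib

open Finset
namespace Stmt5Aux
variable {V : Type*} [DecidableEq V]

def dg (S : Finset (Sym2 V)) (y : V) : ℕ := (S.filter (fun e => y ∈ e)).card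

lemma dg_mono {S T : Finset (Sym2 V)} (h : T ⊆ S) (y : V) : dg T y ≤ dg S y :=
  Finset.card_le_card (Finset.filter_subset_filter _ h)

lemma dg_sdiff {S T : Finset (Sym2 V)} (h : T ⊆ S) (y : V) :
    dg (S \ T) y = dg S y - dg T y := by
  unfold dg
  have h1 : (S \ T).filter (fun e => y ∈ e)
      = S.filter (fun e => y ∈ e) \ T.filter (fun e => y ∈ e) := by
    ext e; simp [Finset.mem_filter]; tauto
  rw [h1, Finset.card_sdiff_of_subset (Finset.filter_subset_filter _ h)]

lemma dg_singleton (e : Sym2 V) (y : V) :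
    dg {e} y = if y ∈ e then 1 else 0 := by
  unfold dg
  rw [Finset.filter_singleton]
  split <;> simp

lemma dg_insert {e : Sym2 V} {E : Finset (Sym2 V)} (he : e ∉ E) (y : V) :
    dg (insert e E) y = (if y ∈ e then 1 else 0) + dg E y := by
  unfold dg
  rw [Finset.filter_insert]
  split
  · rw [Finset.card_insert_of_notMem (by simp [he])]
    omega
  · omega

lemma dg_symmDiff (A B : Finset (Sym2 V)) (y : V) :
    dg (symmDiff A B) y + 2 * dg (A ∩ B) y = dg A y + dg B y := by
  unfold dg
  have h1 : (symmDiff A B).filter (fun e => y ∈ e)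
      = symmDiff (A.filter (fun e => y ∈ e)) (B.filter (fun e => y ∈ e)) := by
    ext e; simp [Finset.mem_symmDiff, Finset.mem_filter]; tauto
  have h2 : (A ∩ B).filter (fun e => y ∈ e)
      = (A.filter (fun e => y ∈ e)) ∩ (B.filter (fun e => y ∈ e)) := by
    ext e; simp [Finset.mem_filter]; tauto
  rw [h1, h2]
  generalize A.filter (fun e => y ∈ e) = X
  generalize B.filter (fun e => y ∈ e) = Y
  have h3 : symmDiff X Y = (X ∪ Y) \ (X ∩ Y) := by
    ext e; simp [Finset.mem_symmDiff]; tauto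
  have h4 : (X ∩ Y) ⊆ (X ∪ Y) := (Finset.inter_subset_left).trans Finset.subset_union_left
  have h5 := Finset.card_union_add_card_inter X Y
  rw [h3, Finset.card_sdiff_of_subset h4]
  have h6 : (X ∩ Y).card ≤ (X ∪ Y).card := Finset.card_le_card h4
  omega


variable {G : SimpleGraph V}

lemma dg_zero_of_not_mem_support {a b y : V} (q : G.Walk a b) (hy : y ∉ q.support) :
    dg q.edges.toFinset y = 0 := by
  unfold dg
  rw [Finset.card_eq_zero, Finset.filter_eq_empty_iff]
  intro e he hye
  rw [List.mem_toFinset] at he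
  obtain ⟨z, rfl⟩ := Sym2.mem_iff_exists.mp hye
  exact hy (q.fst_mem_support_of_mem_edges he)

lemma dg_path_parity {u v : V} (p : G.Walk u v) (hp : p.IsPath) (huv : u ≠ v) (y : V) :
    Odd (dg p.edges.toFinset y) ↔ y = u ∨ y = v := by
  induction p with
  | nil => exact absurd rfl huv
  | @cons u w v h q ih =>
    rw [SimpleGraph.Walk.cons_isPath_iff] at hp
    have hne : s(u, w) ∉ q.edges.toFinset := by
      rw [List.mem_toFinset]
      intro hmem
      exact hp.2 (q.fst_mem_support_of_mem_edges hmem)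
    have hE : (SimpleGraph.Walk.cons h q).edges.toFinset
        = insert s(u, w) q.edges.toFinset := by
      simp [SimpleGraph.Walk.edges_cons]
    rw [hE, dg_insert hne]
    rcases eq_or_ne w v with rfl | hwv
    · have hq : q = SimpleGraph.Walk.nil := (SimpleGraph.Walk.isPath_iff_eq_nil (p := q)).mp hp.1
      subst hq
      simp only [SimpleGraph.Walk.edges_nil, List.toFinset_nil]
      have : dg (∅ : Finset (Sym2 V)) y = 0 := by simp [dg]
      rw [this]
      by_cases hy : y ∈ s(u, w)
      · simp only [if_pos hy]
        rw [Sym2.mem_iff] at hy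
        simpa using Or.imp id id hy
      · simp only [if_neg hy]
        rw [Sym2.mem_iff] at hy
        push_neg at hy
        simp [hy.1, hy.2, Nat.odd_iff]
    · have ihq := ih hp.1 hwv
      by_cases hyu : y = u
      · subst hyu
        have h0 : dg q.edges.toFinset y = 0 := dg_zero_of_not_mem_support q hp.2
        rw [h0, if_pos (by simp)]
        simp
      · have hm : (y ∈ s(u, w)) ↔ y = w := by
          rw [Sym2.mem_iff]; simp [hyu]
        by_cases hyw : y = w
        · subst hyw
          rw [if_pos (hm.mpr rfl)]
          have : Odd (dg q.edges.toFinset y) := ihq.mpr (Or.inl rfl)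
          rw [Nat.odd_iff] at this ⊢
          constructor
          · intro hodd; omega
          · rintro (rfl | rfl)
            · exact absurd rfl hyu
            · exact absurd rfl hwv
        · rw [if_neg (fun hc => hyw (hm.mp hc)), zero_add, ihq]
          simp [hyu, hyw]


lemma exists_path_of_oddSet (G : SimpleGraph V) {v : V} :
    ∀ (n : ℕ) (S : Finset (Sym2 V)), S.card ≤ n → (∀ e ∈ S, e ∈ G.edgeSet) →
    ∀ u : V, u ≠ v → (∀ y, Odd (dg S y) ↔ (y = u ∨ y = v)) →
    ∃ p : G.Walk u v, p.IsPath ∧ p.edges.toFinset ⊆ S := by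
  intro n
  induction n with
  | zero =>
    intro S hcard _ u huv hodd
    rw [Nat.le_zero, Finset.card_eq_zero] at hcard
    subst hcard
    have := (hodd u).mpr (Or.inl rfl)
    simp [dg] at this
  | succ n ih =>
    intro S hcard hS u huv hodd
    have hu : Odd (dg S u) := (hodd u).mpr (Or.inl rfl)
    have hpos : 0 < dg S u := by
      rcases hu with ⟨k, hk⟩; omega
    rw [dg, Finset.card_pos] at hpos
    obtain ⟨e, he⟩ := hpos
    rw [Finset.mem_filter] at he
    obtain ⟨heS, heu⟩ := he
    obtain ⟨z, rfl⟩ := Sym2.mem_iff_exists.mp heu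
    have hadj : G.Adj u z := (SimpleGraph.mem_edgeSet G).mp (hS _ heS)
    have hzu : z ≠ u := hadj.ne'
    rcases eq_or_ne z v with rfl | hzv
    · refine ⟨SimpleGraph.Walk.cons hadj SimpleGraph.Walk.nil, ?_, ?_⟩
      · simp [huv]
      · intro e he
        simp only [SimpleGraph.Walk.edges_cons, SimpleGraph.Walk.edges_nil,
          List.toFinset_cons, List.toFinset_nil, Finset.mem_insert] at he
        rcases he with rfl | he
        · exact heS
        · simp at he
    · -- remove e, recurse from z
      set S' := S \ {s(u, z)} with hS'
      have hsub : ({s(u, z)} : Finset (Sym2 V)) ⊆ S := Finset.singleton_subset_iff.mpr heS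
      have hcard' : S'.card ≤ n := by
        rw [hS', Finset.card_sdiff_of_subset hsub]
        have : 1 ≤ S.card := Finset.card_pos.mpr ⟨_, heS⟩
        simp only [Finset.card_singleton]
        omega
      have hS'edges : ∀ e ∈ S', e ∈ G.edgeSet := fun e hme =>
        hS e (Finset.mem_sdiff.mp hme).1
      have hodd' : ∀ y, Odd (dg S' y) ↔ (y = z ∨ y = v) := by
        intro y
        have hd := dg_sdiff hsub y
        have hsing := dg_singleton (s(u, z)) y
        have hmono := dg_mono hsub y
        have hy := hodd y
        rw [hS', hd]
        rw [Nat.odd_iff] at hy ⊢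
        by_cases h1 : y = u
        · have hb : dg ({s(u,z)} : Finset (Sym2 V)) y = 1 := by
            rw [hsing, if_pos (by rw [Sym2.mem_iff]; exact Or.inl h1)]
          have ha : dg S y % 2 = 1 := hy.mpr (Or.inl h1)
          rw [hb] at hmono ⊢
          constructor
          · intro h; omega
          · rintro (h | h)
            · exact absurd (h.symm.trans h1) hzu
            · exact absurd (h1 ▸ h) huv
        · by_cases h2 : y = z
          · have hb : dg ({s(u,z)} : Finset (Sym2 V)) y = 1 := by
              rw [hsing, if_pos (by rw [Sym2.mem_iff]; exact Or.inr h2)]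
            have ha : dg S y % 2 = 0 := by
              have : ¬ (y = u ∨ y = v) := by
                push_neg; exact ⟨h1, h2 ▸ hzv⟩
              have hne : dg S y % 2 ≠ 1 := fun h => this (hy.mp h)
              omega
            rw [hb] at hmono ⊢
            constructor
            · intro _; exact Or.inl h2
            · intro _; omega
          · have hb : dg ({s(u,z)} : Finset (Sym2 V)) y = 0 := by
              rw [hsing, if_neg (by rw [Sym2.mem_iff]; push_neg; exact ⟨h1, h2⟩)]
            rw [hb, Nat.sub_zero, hy]
            constructor
            · rintro (h | h)
              · exact absurd h h1
              · exact Or.inr h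
            · rintro (h | h)
              · exact absurd h h2
              · exact Or.inr h
      obtain ⟨p', hp', hp'sub⟩ := ih S' hcard' hS'edges z hzv hodd'
      by_cases hu' : u ∈ p'.support
      · refine ⟨p'.dropUntil u hu', hp'.dropUntil hu', ?_⟩
        intro e hme
        rw [List.mem_toFinset] at hme
        have : e ∈ p'.edges := (p'.edges_dropUntil_subset hu') hme
        exact (Finset.mem_sdiff.mp (hp'sub (List.mem_toFinset.mpr this))).1
      · refine ⟨SimpleGraph.Walk.cons hadj p', ?_, ?_⟩
        · rw [SimpleGraph.Walk.cons_isPath_iff]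
          exact ⟨hp', hu'⟩
        · intro e hme
          simp only [SimpleGraph.Walk.edges_cons, List.toFinset_cons,
            Finset.mem_insert] at hme
          rcases hme with rfl | hme
          · exact heS
          · exact (Finset.mem_sdiff.mp (hp'sub hme)).1


lemma even_nonneg (G : SimpleGraph V) (wt : Sym2 V → ℤ)
    (hcyc : ∀ (x : V) (c : G.Walk x x), c.IsCycle →
      0 < ∑ e ∈ c.edges.toFinset, wt e) :
    ∀ (n : ℕ) (S : Finset (Sym2 V)), S.card ≤ n → (∀ e ∈ S, e ∈ G.edgeSet) →
    (∀ y, ¬ Odd (dg S y)) → 0 ≤ ∑ e ∈ S, wt e := by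
  intro n
  induction n with
  | zero =>
    intro S hcard _ _
    rw [Nat.le_zero, Finset.card_eq_zero] at hcard
    subst hcard; simp
  | succ n ih =>
    intro S hcard hS heven
    rcases S.eq_empty_or_nonempty with rfl | ⟨e, he⟩
    · simp
    · revert he
      induction e using Sym2.ind with
      | _ a b =>
        intro he
        have hadj : G.Adj a b := (SimpleGraph.mem_edgeSet G).mp (hS _ he)
        have hab : a ≠ b := hadj.ne
        set S' := S \ {s(a, b)} with hS'
        have hsub : ({s(a, b)} : Finset (Sym2 V)) ⊆ S := Finset.singleton_subset_iff.mpr he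
        have hS'edges : ∀ e ∈ S', e ∈ G.edgeSet := fun e hme =>
          hS e (Finset.mem_sdiff.mp hme).1
        have hcard' : S'.card ≤ n := by
          rw [hS', Finset.card_sdiff_of_subset hsub]
          have : 1 ≤ S.card := Finset.card_pos.mpr ⟨_, he⟩
          simp only [Finset.card_singleton]; omega
        have hodd' : ∀ y, Odd (dg S' y) ↔ (y = a ∨ y = b) := by
          intro y
          have hd := dg_sdiff hsub y
          have hsing := dg_singleton (s(a, b)) y
          have hmono := dg_mono hsub y
          have hy := heven y
          rw [hS', hd, Nat.odd_iff] at *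
          by_cases hye : y = a ∨ y = b
          · have hb : dg ({s(a,b)} : Finset (Sym2 V)) y = 1 := by
              rw [hsing, if_pos (by rw [Sym2.mem_iff]; exact hye)]
            rw [hb] at hmono ⊢
            have ha0 : dg S y % 2 = 0 := by omega
            constructor
            · intro _; exact hye
            · intro _; omega
          · have hb : dg ({s(a,b)} : Finset (Sym2 V)) y = 0 := by
              rw [hsing, if_neg (by rw [Sym2.mem_iff]; exact hye)]
            rw [hb, Nat.sub_zero]
            constructor
            · intro h; omega
            · intro h; exact absurd h hye
        obtain ⟨p, hp, hpsub⟩ := exists_path_of_oddSet G S'.card S' le_rfl hS'edges a hab hodd'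
        have hnotmem : s(b, a) ∉ p.edges := by
          intro hmem
          have : s(b, a) ∈ S' := hpsub (List.mem_toFinset.mpr hmem)
          rw [hS', Finset.mem_sdiff] at this
          exact this.2 (by rw [Sym2.eq_swap]; exact Finset.mem_singleton_self _)
        have hcycle : (SimpleGraph.Walk.cons hadj.symm p).IsCycle :=
          (SimpleGraph.Walk.cons_isCycle_iff p hadj.symm).mpr ⟨hp, hnotmem⟩
        set c := SimpleGraph.Walk.cons hadj.symm p with hc
        have hpos := hcyc b c hcycle
        have hcE : c.edges.toFinset = insert s(b, a) p.edges.toFinset := by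
          simp [hc]
        have hbanotmem : s(b, a) ∉ p.edges.toFinset := fun h => hnotmem (List.mem_toFinset.mp h)
        have hcsub : c.edges.toFinset ⊆ S := by
          rw [hcE]
          refine Finset.insert_subset ?_ (fun e hme => (Finset.mem_sdiff.mp (hpsub hme)).1)
          rw [Sym2.eq_swap]; exact he
        have hceven : ∀ y, ¬ Odd (dg c.edges.toFinset y) := by
          intro y
          rw [hcE, dg_insert hbanotmem y]
          have hpp := dg_path_parity p hp hab y
          rw [Nat.odd_iff] at hpp ⊢
          by_cases hye : y = a ∨ y = b
          · rw [if_pos (by rw [Sym2.mem_iff]; tauto)]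
            have := hpp.mpr hye
            omega
          · rw [if_neg (by rw [Sym2.mem_iff]; tauto)]
            have : ¬ dg p.edges.toFinset y % 2 = 1 := fun h => hye (hpp.mp h)
            omega
        have hS''even : ∀ y, ¬ Odd (dg (S \ c.edges.toFinset) y) := by
          intro y
          have hd := dg_sdiff hcsub y
          have hmono := dg_mono hcsub y
          have h1 := heven y
          have h2 := hceven y
          rw [Nat.odd_iff] at *
          omega
        have hS''card : (S \ c.edges.toFinset).card ≤ n := by
          rw [Finset.card_sdiff_of_subset hcsub]
          have h1 : 1 ≤ c.edges.toFinset.card := by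
            rw [hcE]
            have := Finset.card_insert_of_notMem hbanotmem
            omega
          have : 1 ≤ S.card := Finset.card_pos.mpr ⟨_, he⟩
          have := Finset.card_le_card hcsub
          omega
        have hS''edges : ∀ e ∈ S \ c.edges.toFinset, e ∈ G.edgeSet := fun e hme =>
          hS e (Finset.mem_sdiff.mp hme).1
        have hrec := ih (S \ c.edges.toFinset) hS''card hS''edges hS''even
        have hsum := Finset.sum_sdiff (f := wt) hcsub
        linarith


lemma odd_xor {a b c k : ℕ} (h : c + 2 * k = a + b) :
    Odd c ↔ (Odd a ↔ ¬ Odd b) := by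
  rw [Nat.odd_iff, Nat.odd_iff, Nat.odd_iff]
  omega

lemma odd_sub {a b : ℕ} (h : b ≤ a) :
    Odd (a - b) ↔ (Odd a ↔ ¬ Odd b) := by
  rw [Nat.odd_iff, Nat.odd_iff, Nat.odd_iff]
  omega

lemma pairing1 {P0 P1 P2 : Prop} (h01 : ¬(P0 ∧ P1)) (h02 : ¬(P0 ∧ P2)) (h12 : ¬(P1 ∧ P2)) :
    ((P0 ∨ P2) ↔ ¬(P0 ∨ P1)) ↔ (P1 ∨ P2) := by tauto

lemma pairing2 {P0 P1 P3 : Prop} (h01 : ¬(P0 ∧ P1)) (h03 : ¬(P0 ∧ P3)) (h13 : ¬(P1 ∧ P3)) :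
    ((P1 ∨ P3) ↔ ¬(P0 ∨ P1)) ↔ (P3 ∨ P0) := by tauto

lemma sum_symmDiff_pair {A B C : Finset (Sym2 V)} (hC : C ⊆ symmDiff A B)
    (f : Sym2 V → ℤ) :
    ∑ e ∈ symmDiff A C, f e + ∑ e ∈ symmDiff B C, f e
      = ∑ e ∈ A, f e + ∑ e ∈ B, f e := by
  have key : ∀ X : Finset (Sym2 V),
      ∑ e ∈ symmDiff X C, f e = ∑ e ∈ X, f e + ∑ e ∈ C, f e - 2 * ∑ e ∈ X ∩ C, f e := by
    intro X
    have h1 : symmDiff X C = (X \ C) ∪ (C \ X) := rfl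
    have h2 : Disjoint (X \ C) (C \ X) :=
      disjoint_sdiff_sdiff
    rw [h1, Finset.sum_union h2]
    have h3 : X \ C = X \ (X ∩ C) := by rw [Finset.sdiff_inter_self_left]
    have h4 : C \ X = C \ (X ∩ C) := by
      rw [Finset.inter_comm, Finset.sdiff_inter_self_left]
    rw [h3, h4, Finset.sum_sdiff_eq_sub Finset.inter_subset_left,
      Finset.sum_sdiff_eq_sub (Finset.inter_subset_right)]
    ring
  rw [key A, key B]
  have hsplit : ∑ e ∈ A ∩ C, f e + ∑ e ∈ B ∩ C, f e = ∑ e ∈ C, f e := by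
    have hdisj : Disjoint (A ∩ C) (B ∩ C) := by
      rw [Finset.disjoint_left]
      intro e he1 he2
      rw [Finset.mem_inter] at he1 he2
      have := hC he1.2
      rw [Finset.mem_symmDiff] at this
      tauto
    rw [← Finset.sum_union hdisj]
    congr 1
    ext e
    rw [Finset.mem_union, Finset.mem_inter, Finset.mem_inter]
    constructor
    · tauto
    · intro he
      have := hC he
      rw [Finset.mem_symmDiff] at this
      tauto
  linarith

end Stmt5Aux

open Stmt5Aux in
theorem stmt_5 {V : Type*} [Fintype V] [DecidableEq V]
    (G : SimpleGraph V) [DecidableRel G.Adj]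
    (hbip : G.Colorable 2)
    (wt : Sym2 V → ℤ) (hwt : ∀ e ∈ G.edgeSet, wt e = 1 ∨ wt e = -1)
    (hcyc : ∀ (x : V) (c : G.Walk x x), c.IsCycle →
      0 < ∑ e ∈ c.edges.toFinset, wt e)
    (v₀ v₁ v₂ v₃ : V)
    (h01 : v₀ ≠ v₁) (h02 : v₀ ≠ v₂) (h03 : v₀ ≠ v₃)
    (h12 : v₁ ≠ v₂) (h13 : v₁ ≠ v₃) (h23 : v₂ ≠ v₃)
    (P : G.Walk v₀ v₂) (hP : P.IsPath)
    (P' : G.Walk v₁ v₃) (hP' : P'.IsPath)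
    (hconn : (SimpleGraph.fromEdgeSet
        (↑(symmDiff P.edges.toFinset P'.edges.toFinset) : Set (Sym2 V))).Reachable v₀ v₁) :
    ∃ (P12 : G.Walk v₁ v₂) (P30 : G.Walk v₃ v₀),
      P12.IsPath ∧ P30.IsPath ∧
      ∑ e ∈ P12.edges.toFinset, wt e + ∑ e ∈ P30.edges.toFinset, wt e ≤
        ∑ e ∈ P.edges.toFinset, wt e + ∑ e ∈ P'.edges.toFinset, wt e := by
  classical
  set A := P.edges.toFinset with hA
  set B := P'.edges.toFinset with hB
  set F := symmDiff A B with hF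
  have hAset : ∀ e ∈ A, e ∈ G.edgeSet := fun e he =>
    P.edges_subset_edgeSet (List.mem_toFinset.mp he)
  have hBset : ∀ e ∈ B, e ∈ G.edgeSet := fun e he =>
    P'.edges_subset_edgeSet (List.mem_toFinset.mp he)
  have hFset : ∀ e ∈ F, e ∈ G.edgeSet := by
    intro e he
    rw [hF, Finset.mem_symmDiff] at he
    rcases he with ⟨h1, _⟩ | ⟨h1, _⟩
    · exact hAset e h1
    · exact hBset e h1
  have hle : SimpleGraph.fromEdgeSet (↑F : Set (Sym2 V)) ≤ G := by
    intro a b hab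
    rw [SimpleGraph.fromEdgeSet_adj] at hab
    exact (SimpleGraph.mem_edgeSet G).mp (hFset _ hab.1)
  obtain ⟨w₀⟩ := hconn
  set q1 := w₀.bypass with hq1def
  have hq1 : q1.IsPath := w₀.bypass_isPath
  have hq1G : ∀ e ∈ q1.edges, e ∈ G.edgeSet := by
    intro e he
    have h2 := q1.edges_subset_edgeSet he
    rw [SimpleGraph.edgeSet_fromEdgeSet] at h2
    exact hFset _ (Finset.mem_coe.mp h2.1)
  set Q := q1.transfer G hq1G with hQdef
  have hQpath : Q.IsPath := hq1.transfer hq1G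
  have hQedges : Q.edges = q1.edges := q1.edges_transfer hq1G
  set QE := Q.edges.toFinset with hQE
  have hQEF : QE ⊆ F := by
    intro e he
    rw [hQE, hQedges, List.mem_toFinset] at he
    have := q1.edges_subset_edgeSet he
    rw [SimpleGraph.edgeSet_fromEdgeSet] at this
    exact Finset.mem_coe.mp this.1
  have hQEset : ∀ e ∈ QE, e ∈ G.edgeSet := fun e he => hFset e (hQEF he)
  -- parity facts
  have hparA : ∀ y, Odd (dg A y) ↔ (y = v₀ ∨ y = v₂) := dg_path_parity P hP h02
  have hparB : ∀ y, Odd (dg B y) ↔ (y = v₁ ∨ y = v₃) := dg_path_parity P' hP' h13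
  have hparQ : ∀ y, Odd (dg QE y) ↔ (y = v₀ ∨ y = v₁) := dg_path_parity Q hQpath h01
  set S₁ := symmDiff A QE with hS₁
  set S₂ := symmDiff B QE with hS₂
  have hS₁set : ∀ e ∈ S₁, e ∈ G.edgeSet := by
    intro e he
    rw [hS₁, Finset.mem_symmDiff] at he
    rcases he with ⟨h1, _⟩ | ⟨h1, _⟩
    · exact hAset e h1
    · exact hQEset e h1
  have hS₂set : ∀ e ∈ S₂, e ∈ G.edgeSet := by
    intro e he
    rw [hS₂, Finset.mem_symmDiff] at he
    rcases he with ⟨h1, _⟩ | ⟨h1, _⟩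
    · exact hBset e h1
    · exact hQEset e h1
  have hparS₁ : ∀ y, Odd (dg S₁ y) ↔ (y = v₁ ∨ y = v₂) := by
    intro y
    rw [odd_xor (dg_symmDiff A QE y), hparA y, hparQ y]
    exact pairing1 (fun h => h01 (h.1.symm.trans h.2)) (fun h => h02 (h.1.symm.trans h.2))
      (fun h => h12 (h.1.symm.trans h.2))
  have hparS₂ : ∀ y, Odd (dg S₂ y) ↔ (y = v₃ ∨ y = v₀) := by
    intro y
    rw [odd_xor (dg_symmDiff B QE y), hparB y, hparQ y]
    exact pairing2 (fun h => h01 (h.1.symm.trans h.2)) (fun h => h03 (h.1.symm.trans h.2))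
      (fun h => h13 (h.1.symm.trans h.2))
  obtain ⟨P12, hP12, hP12sub⟩ :=
    exists_path_of_oddSet G S₁.card S₁ le_rfl hS₁set v₁ h12 hparS₁
  obtain ⟨P30, hP30, hP30sub⟩ :=
    exists_path_of_oddSet G S₂.card S₂ le_rfl hS₂set v₃ (fun h => h03 h.symm) hparS₂
  have hw1 : ∑ e ∈ P12.edges.toFinset, wt e ≤ ∑ e ∈ S₁, wt e := by
    have heven : ∀ y, ¬ Odd (dg (S₁ \ P12.edges.toFinset) y) := by
      intro y
      rw [dg_sdiff hP12sub y, odd_sub (dg_mono hP12sub y), hparS₁ y,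
        dg_path_parity P12 hP12 h12 y]
      tauto
    have h0 := even_nonneg G wt hcyc (S₁ \ P12.edges.toFinset).card _ le_rfl
      (fun e he => hS₁set e (Finset.mem_sdiff.mp he).1) heven
    have h1 := Finset.sum_sdiff (f := wt) hP12sub
    linarith
  have hw2 : ∑ e ∈ P30.edges.toFinset, wt e ≤ ∑ e ∈ S₂, wt e := by
    have heven : ∀ y, ¬ Odd (dg (S₂ \ P30.edges.toFinset) y) := by
      intro y
      rw [dg_sdiff hP30sub y, odd_sub (dg_mono hP30sub y), hparS₂ y,
        dg_path_parity P30 hP30 (fun h => h03 h.symm) y]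
      tauto
    have h0 := even_nonneg G wt hcyc (S₂ \ P30.edges.toFinset).card _ le_rfl
      (fun e he => hS₂set e (Finset.mem_sdiff.mp he).1) heven
    have h1 := Finset.sum_sdiff (f := wt) hP30sub
    linarith
  have hkey : ∑ e ∈ S₁, wt e + ∑ e ∈ S₂, wt e = ∑ e ∈ A, wt e + ∑ e ∈ B, wt e :=
    sum_symmDiff_pair hQEF wt
  exact ⟨P12, P30, hP12, hP30, by linarith⟩
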